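/- There exists a constant C > 0, independent of γ, such that for every γ ∈ [0,1] and every self-similar profile G ∈ 𝓔_γ one has G(x) ≤ C/|x| for almost every x ∈ ℝ. -/

import Mathlib

open MeasureTheory Real Set Filter Topology

noncomputable section

/-- `G ∈ 𝓔_γ`: nonnegative, unit mass, zero momentum, third moment finite,
satisfying the weak steady self-similar equation against bounded `C¹` test functions. -/
def IsProfile (γ : ℝ) (G : ℝ → ℝ) : Prop :=
  (∀ x, 0 ≤ G x) ∧
  Integrable G ∧
  Integrable (fun x => (1 + |x|) ^ (3 : ℝ) * G x) ∧
  (∫ x, G x) = 1 ∧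
  (∫ x, x * G x) = 0 ∧
  ∀ φ : ℝ → ℝ, ContDiff ℝ 1 φ →
    (∃ M, ∀ x, |φ x| ≤ M ∧ |deriv φ x| ≤ M) →
    -(1/4) * (∫ x, x * deriv φ x * G x) =
      (1/2) * ∫ x, ∫ y, |x - y| ^ γ * (2 * φ ((x + y) / 2) - φ x - φ y) * G x * G y




/-- Bernoulli-based weighted Jensen inequality. -/
lemma jensen_w {w f : ℝ → ℝ} {q : ℝ} (hq : 1 ≤ q)
    (hw : ∀ x, 0 ≤ w x) (hf : ∀ x, 0 ≤ f x)
    (hw1 : (∫ x, w x) = 1)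
    (hwi : Integrable w)
    (h1 : Integrable (fun x => f x * w x))
    (h2 : Integrable (fun x => f x ^ q * w x)) :
    (∫ x, f x * w x) ^ q ≤ ∫ x, f x ^ q * w x := by
  set a := ∫ x, f x * w x with ha
  have ha0 : 0 ≤ a := integral_nonneg fun x => mul_nonneg (hf x) (hw x)
  rcases eq_or_lt_of_le ha0 with h | h
  · rw [← h, Real.zero_rpow (by linarith)]
    exact integral_nonneg fun x => mul_nonneg (Real.rpow_nonneg (hf x) q) (hw x)
  · have key : ∀ x, (a ^ q * (1 - q) + (a ^ q * q / a) * f x) * w x ≤ f x ^ q * w x := by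
      intro x
      apply mul_le_mul_of_nonneg_right _ (hw x)
      have hs : -1 ≤ f x / a - 1 := by
        have : 0 ≤ f x / a := div_nonneg (hf x) ha0
        linarith
      have hber := one_add_mul_self_le_rpow_one_add hs hq
      rw [show (1 : ℝ) + (f x / a - 1) = f x / a by ring] at hber
      rw [Real.div_rpow (hf x) ha0] at hber
      have haq : 0 < a ^ q := Real.rpow_pos_of_pos h q
      have := mul_le_mul_of_nonneg_left hber (le_of_lt haq)
      calc a ^ q * (1 - q) + (a ^ q * q / a) * f x
          = a ^ q * (1 + q * (f x / a - 1)) := by field_simp; ring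
        _ ≤ a ^ q * (f x ^ q / a ^ q) := this
        _ = f x ^ q := by field_simp
    have hLi : Integrable (fun x => (a ^ q * (1 - q) + (a ^ q * q / a) * f x) * w x) := by
      have : (fun x => (a ^ q * (1 - q) + (a ^ q * q / a) * f x) * w x)
          = fun x => (a ^ q * (1 - q)) * w x + (a ^ q * q / a) * (f x * w x) := by
        funext x; ring
      rw [this]
      exact (hwi.const_mul _).add (h1.const_mul _)
    have := integral_mono hLi h2 key
    calc a ^ q = ∫ x, (a ^ q * (1 - q) + (a ^ q * q / a) * f x) * w x := by
          have : (fun x => (a ^ q * (1 - q) + (a ^ q * q / a) * f x) * w x)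
              = fun x => (a ^ q * (1 - q)) * w x + (a ^ q * q / a) * (f x * w x) := by
            funext x; ring
          rw [this, integral_add ((hwi.const_mul _)) (h1.const_mul _),
            integral_const_mul, integral_const_mul, hw1, ← ha]
          field_simp
          ring
      _ ≤ ∫ x, f x ^ q * w x := this

/-- simple consequence: a^q ≤ a with q>1 forces a ≤ 1 -/
lemma le_one_of_rpow_le {a q : ℝ} (ha : 0 ≤ a) (hq : 1 < q) (h : a ^ q ≤ a) : a ≤ 1 := by
  by_contra hc
  push_neg at hc
  have := Real.rpow_lt_rpow_of_exponent_lt hc hq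
  rw [Real.rpow_one] at this
  linarith

lemma rpow_le_one_add {p t : ℝ} (h0 : 0 ≤ p) (h1 : p ≤ 1) (ht : 0 ≤ t) : t ^ p ≤ 1 + t := by
  rcases le_or_gt t 1 with h | h
  · have := Real.rpow_le_one ht h h0
    linarith
  · have := Real.rpow_le_rpow_of_exponent_le h.le h1
    rw [Real.rpow_one] at this
    linarith

lemma rpow_le_cube {p t : ℝ} (h0 : 0 ≤ p) (h1 : p ≤ 3) (ht : 0 ≤ t) : t ^ p ≤ (1 + t) ^ 3 := by
  have h13 : (1:ℝ) ≤ (1+t)^3 := by nlinarith [ht, sq_nonneg t, sq_nonneg (1+t)]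
  rcases le_or_gt t 1 with h | h
  · have := Real.rpow_le_one ht h h0
    linarith
  · have h2 : t ^ p ≤ t ^ (3:ℝ) := Real.rpow_le_rpow_of_exponent_le h.le h1
    have h3 : t ^ (3:ℝ) = t ^ (3:ℕ) := Real.rpow_natCast t 3
    have h4 : t ^ (3:ℕ) ≤ (1+t)^(3:ℕ) := pow_le_pow_left₀ ht (by linarith) 3
    calc t ^ p ≤ t ^ (3:ℝ) := h2
      _ = t ^ (3:ℕ) := h3
      _ ≤ (1+t) ^ (3:ℕ) := h4

lemma one_add_abs_mul (x y : ℝ) : 1 + |x - y| ≤ (1 + |x|) * (1 + |y|) := by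
  have h := abs_sub x y
  have hx := abs_nonneg x
  have hy := abs_nonneg y
  nlinarith [abs_sub_abs_le_abs_sub x y, abs_sub x y]

lemma kernel_le {γ : ℝ} (h0 : 0 ≤ γ) (h1 : γ ≤ 1) (x y : ℝ) :
    |x - y| ^ γ ≤ (1 + |x|) * (1 + |y|) := by
  calc |x - y| ^ γ ≤ 1 + |x - y| := rpow_le_one_add h0 h1 (abs_nonneg _)
    _ ≤ (1 + |x|) * (1 + |y|) := one_add_abs_mul x y

lemma kernel_le_cube {γ : ℝ} (h0 : 0 ≤ γ) (h1 : γ ≤ 3) (x y : ℝ) :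
    |x - y| ^ γ ≤ (1 + |x|) ^ 3 * (1 + |y|) ^ 3 := by
  have h2 : |x - y| ^ γ ≤ (1 + |x - y|) ^ 3 := rpow_le_cube h0 h1 (abs_nonneg _)
  have h3 : (1 + |x - y|) ^ 3 ≤ ((1 + |x|) * (1 + |y|)) ^ 3 := by
    apply pow_le_pow_left₀ (by positivity) (one_add_abs_mul x y)
  calc |x - y| ^ γ ≤ (1 + |x - y|) ^ 3 := h2
    _ ≤ ((1 + |x|) * (1 + |y|)) ^ 3 := h3
    _ = (1 + |x|) ^ 3 * (1 + |y|) ^ 3 := by ring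



def tf (ε : ℝ) : ℝ → ℝ := fun x => x ^ 2 / (1 + ε * x ^ 2)

lemma tf_denom_pos {ε : ℝ} (hε : 0 < ε) (x : ℝ) : 0 < 1 + ε * x ^ 2 := by positivity

lemma tf_contDiff {ε : ℝ} (hε : 0 < ε) : ContDiff ℝ 1 (tf ε) := by
  apply ContDiff.div
  · exact contDiff_id.pow 2
  · exact contDiff_const.add (contDiff_const.mul (contDiff_id.pow 2))
  · exact fun x => ne_of_gt (tf_denom_pos hε x)

lemma tf_hasDerivAt {ε : ℝ} (hε : 0 < ε) (x : ℝ) :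
    HasDerivAt (tf ε) (2 * x / (1 + ε * x ^ 2) ^ 2) x := by
  have h1 : HasDerivAt (fun x : ℝ => x ^ 2) (2 * x) x := by
    simpa using hasDerivAt_pow 2 x
  have h2 : HasDerivAt (fun x : ℝ => 1 + ε * x ^ 2) (ε * (2 * x)) x :=
    (h1.const_mul ε).const_add 1
  have h : HasDerivAt (tf ε) ((2 * x * (1 + ε * x ^ 2) - x ^ 2 * (ε * (2 * x))) / (1 + ε * x ^ 2) ^ 2) x :=
    h1.div h2 (ne_of_gt (tf_denom_pos hε x))
  convert h using 1
  have := ne_of_gt (tf_denom_pos hε x)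
  congr 1
  ring

lemma tf_deriv {ε : ℝ} (hε : 0 < ε) :
    deriv (tf ε) = fun x => 2 * x / (1 + ε * x ^ 2) ^ 2 :=
  funext fun x => (tf_hasDerivAt hε x).deriv

lemma tf_nonneg {ε : ℝ} (hε : 0 < ε) (x : ℝ) : 0 ≤ tf ε x :=
  div_nonneg (sq_nonneg x) (tf_denom_pos hε x).le

lemma tf_le_sq {ε : ℝ} (hε : 0 < ε) (x : ℝ) : tf ε x ≤ x ^ 2 := by
  rw [tf, div_le_iff₀ (tf_denom_pos hε x)]
  nlinarith [sq_nonneg x, mul_nonneg (mul_nonneg hε.le (sq_nonneg x)) (sq_nonneg x)]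

lemma tf_bounded {ε : ℝ} (hε : 0 < ε) (x : ℝ) : |tf ε x| ≤ 1 / ε + 1 / Real.sqrt ε := by
  rw [abs_of_nonneg (tf_nonneg hε x)]
  have h1 : tf ε x ≤ 1 / ε := by
    rw [tf, div_le_div_iff₀ (tf_denom_pos hε x) hε]
    nlinarith
  have : 0 < Real.sqrt ε := Real.sqrt_pos.mpr hε
  have : 0 ≤ 1 / Real.sqrt ε := by positivity
  linarith

lemma tf_deriv_bounded {ε : ℝ} (hε : 0 < ε) (x : ℝ) :
    |deriv (tf ε) x| ≤ 1 / ε + 1 / Real.sqrt ε := by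
  rw [tf_deriv hε]
  have hd := tf_denom_pos hε x
  have hsq : Real.sqrt ε ^ 2 = ε := Real.sq_sqrt hε.le
  have hs : 0 < Real.sqrt ε := Real.sqrt_pos.mpr hε
  have hamgm : 2 * Real.sqrt ε * |x| ≤ 1 + ε * x ^ 2 := by
    nlinarith [sq_nonneg (Real.sqrt ε * |x| - 1), sq_abs x]
  have hd2 : (0:ℝ) < (1 + ε * x ^ 2) ^ 2 := by positivity
  have habs : |2 * x / (1 + ε * x ^ 2) ^ 2| = 2 * |x| / (1 + ε * x ^ 2) ^ 2 := by
    rw [abs_div, abs_of_pos hd2, abs_mul, abs_two]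
  rw [habs]
  have h2 : 2 * |x| / (1 + ε * x ^ 2) ^ 2 ≤ 1 / Real.sqrt ε := by
    rw [div_le_div_iff₀ (by positivity) hs]
    have h3 : (1 + ε * x ^ 2) ≤ (1 + ε * x ^ 2) ^ 2 := by nlinarith [mul_nonneg hε.le (sq_nonneg x), sq_nonneg (ε * x ^ 2)]
    calc 2 * |x| * Real.sqrt ε = 2 * Real.sqrt ε * |x| := by ring
      _ ≤ 1 + ε * x ^ 2 := hamgm
      _ ≤ (1 + ε * x ^ 2) ^ 2 := h3
      _ = 1 * (1 + ε * x ^ 2) ^ 2 := by ring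
  have : 0 ≤ 1 / ε := by positivity
  linarith

lemma tf_tendsto (x : ℝ) :
    Tendsto (fun n : ℕ => tf (1 / (n + 1)) x) atTop (𝓝 (x ^ 2)) := by
  have h0 : Tendsto (fun n : ℕ => (1 : ℝ) / (n + 1)) atTop (𝓝 0) :=
    tendsto_one_div_add_atTop_nhds_zero_nat
  have hc : ContinuousAt (fun ε : ℝ => x ^ 2 / (1 + ε * x ^ 2)) 0 := by
    apply ContinuousAt.div
    · exact continuousAt_const
    · fun_prop
    · simp
  have := hc.tendsto.comp h0
  simpa [tf, Function.comp_def] using this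

lemma tf_deriv_mul_tendsto (x : ℝ) :
    Tendsto (fun n : ℕ => x * deriv (tf (1 / (n + 1))) x) atTop (𝓝 (2 * x ^ 2)) := by
  have hder : ∀ n : ℕ, x * deriv (tf (1 / (n + 1))) x
      = x * (2 * x / (1 + 1 / (n + 1 : ℝ) * x ^ 2) ^ 2) := by
    intro n
    rw [tf_deriv (by positivity)]
  simp only [hder]
  have h0 : Tendsto (fun n : ℕ => (1 : ℝ) / (n + 1)) atTop (𝓝 0) :=
    tendsto_one_div_add_atTop_nhds_zero_nat
  have hc : ContinuousAt (fun ε : ℝ => x * (2 * x / (1 + ε * x ^ 2) ^ 2)) 0 := by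
    apply ContinuousAt.mul continuousAt_const
    apply ContinuousAt.div continuousAt_const
    · fun_prop
    · simp
  have := hc.tendsto.comp h0
  simp only [Function.comp_def] at this
  have heq : x * (2 * x / (1 + 0 * x ^ 2) ^ 2) = 2 * x ^ 2 := by
    norm_num
    ring
  rw [heq] at this
  exact this



lemma bump_antideriv (c ε : ℝ) (hε : 0 < ε) :
    ∃ φ : ℝ → ℝ, ContDiff ℝ 1 φ ∧ (∀ u, 0 ≤ φ u ∧ φ u ≤ 4 * ε) ∧
      (∀ u, 0 ≤ deriv φ u ∧ deriv φ u ≤ 1) ∧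
      (∀ u, u ∈ Icc (c - ε) (c + ε) → deriv φ u = 1) ∧
      (∀ u, u ∉ Ioo (c - 2 * ε) (c + 2 * ε) → deriv φ u = 0) := by
  set b : ContDiffBump c := ⟨ε, 2 * ε, hε, by linarith⟩ with hb
  set χ : ℝ → ℝ := fun t => b t with hχ
  have hχcont : Continuous χ := b.continuous
  have hχ0 : ∀ t, 0 ≤ χ t := fun t => b.nonneg
  have hχ1 : ∀ t, χ t ≤ 1 := fun t => b.le_one
  have hχone : ∀ t, t ∈ Icc (c - ε) (c + ε) → χ t = 1 := by
    intro t ht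
    apply b.one_of_mem_closedBall
    rw [Real.closedBall_eq_Icc]
    exact ht
  have hχzero : ∀ t, t ∉ Ioo (c - 2 * ε) (c + 2 * ε) → χ t = 0 := by
    intro t ht
    have : t ∉ Function.support χ := by
      rw [hχ, ContDiffBump.support_eq, Real.ball_eq_Ioo]
      exact ht
    exact Function.notMem_support.mp this
  set a : ℝ := c - 2 * ε with hadef
  set φ : ℝ → ℝ := fun u => ∫ t in a..u, χ t with hφ
  have hint : ∀ u v : ℝ, IntervalIntegrable χ volume u v := fun u v =>
    hχcont.intervalIntegrable u v
  have hd : ∀ u, HasDerivAt φ (χ u) u := by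
    intro u
    exact intervalIntegral.integral_hasDerivAt_right (hint a u)
      (hχcont.stronglyMeasurable.stronglyMeasurableAtFilter) hχcont.continuousAt
  have hderiv : deriv φ = χ := funext fun u => (hd u).deriv
  have hzero_left : ∀ u, u ≤ a → φ u = 0 := by
    intro u hu
    rw [hφ]
    simp only
    rw [intervalIntegral.integral_symm]
    have : ∫ t in u..a, χ t = ∫ t in u..a, (0:ℝ) := by
      apply intervalIntegral.integral_congr
      intro t ht
      rw [uIcc_of_le hu] at ht
      apply hχzero
      intro hmem
      exact absurd (lt_of_lt_of_le hmem.1 ht.2) (by simp [hadef])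
    rw [this]
    simp
  have hmain : ∀ u, 0 ≤ φ u ∧ φ u ≤ 4 * ε := by
    intro u
    rcases le_or_gt u a with hu | hu
    · rw [hzero_left u hu]
      constructor <;> linarith
    · have h0 : 0 ≤ φ u := intervalIntegral.integral_nonneg hu.le (fun t _ => hχ0 t)
      refine ⟨h0, ?_⟩
      rcases le_or_gt u (a + 4 * ε) with hu2 | hu2
      · have : φ u ≤ ∫ t in a..u, (1:ℝ) := by
          apply intervalIntegral.integral_mono_on hu.le (hint a u)
            (intervalIntegrable_const)
          exact fun t _ => hχ1 t
        rw [intervalIntegral.integral_const] at this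
        simp at this
        linarith
      · have hsplit : φ u = (∫ t in a..(a + 4 * ε), χ t) + ∫ t in (a + 4 * ε)..u, χ t := by
          rw [hφ]
          simp only
          rw [intervalIntegral.integral_add_adjacent_intervals (hint _ _) (hint _ _)]
        have hz : (∫ t in (a + 4 * ε)..u, χ t) = 0 := by
          have : ∫ t in (a + 4 * ε)..u, χ t = ∫ t in (a + 4 * ε)..u, (0:ℝ) := by
            apply intervalIntegral.integral_congr
            intro t ht
            rw [uIcc_of_le hu2.le] at ht
            apply hχzero
            intro hmem
            have : c + 2 * ε ≤ t := by
              have := ht.1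
              simp only [hadef] at this
              linarith
            exact absurd hmem.2 (not_lt.mpr this)
          rw [this]
          simp
        have hle : (∫ t in a..(a + 4 * ε), χ t) ≤ 4 * ε := by
          have : (∫ t in a..(a + 4 * ε), χ t) ≤ ∫ t in a..(a + 4 * ε), (1:ℝ) := by
            apply intervalIntegral.integral_mono_on (by linarith) (hint _ _)
              (intervalIntegrable_const)
            exact fun t _ => hχ1 t
          rw [intervalIntegral.integral_const] at this
          simp at this
          linarith
        rw [hsplit, hz]
        linarith
  refine ⟨φ, ?_, hmain, ?_, ?_, ?_⟩
  · rw [contDiff_one_iff_deriv]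
    refine ⟨fun u => (hd u).differentiableAt, ?_⟩
    rw [hderiv]; exact hχcont
  · intro u; rw [hderiv]; exact ⟨hχ0 u, hχ1 u⟩
  · intro u hu; rw [hderiv]; exact hχone u hu
  · intro u hu; rw [hderiv]; exact hχzero u hu


lemma prof_mul_int {G : ℝ → ℝ} (hpos : ∀ x, 0 ≤ G x) (hGi : Integrable G)
    (hG3 : Integrable (fun x => (1 + |x|) ^ (3 : ℝ) * G x))
    {c : ℝ → ℝ} (hc : AEStronglyMeasurable c volume)
    (hb : ∀ x, |c x| ≤ (1 + |x|) ^ 3) :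
    Integrable (fun x => c x * G x) := by
  have h3 : Integrable (fun x => (1 + |x|) ^ (3 : ℕ) * G x) := by
    have : (fun x : ℝ => (1 + |x|) ^ (3 : ℝ) * G x) = fun x => (1 + |x|) ^ (3 : ℕ) * G x := by
      funext x
      rw [show ((3:ℝ) = ((3:ℕ):ℝ)) by norm_num, Real.rpow_natCast]
    rwa [this] at hG3
  apply h3.mono (hc.mul hGi.aestronglyMeasurable)
  filter_upwards with x
  simp only [Pi.mul_apply]
  rw [norm_mul, norm_mul]
  apply mul_le_mul _ le_rfl (norm_nonneg _) _
  · rw [Real.norm_eq_abs, Real.norm_eq_abs]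
    calc |c x| ≤ (1 + |x|) ^ 3 := hb x
      _ ≤ |(1 + |x|) ^ 3| := le_abs_self _
  · positivity

lemma lemA {γ : ℝ} {G W : ℝ → ℝ}
    (hpos : ∀ x, 0 ≤ G x) (hGi : Integrable G)
    (hG3 : Integrable (fun x => (1 + |x|) ^ (3 : ℝ) * G x))
    (heq : ∀ φ : ℝ → ℝ, ContDiff ℝ 1 φ →
      (∃ M, ∀ x, |φ x| ≤ M ∧ |deriv φ x| ≤ M) →
      -(1/4) * (∫ x, x * deriv φ x * G x) =
        (1/2) * ∫ x, ∫ y, |x - y| ^ γ * (2 * φ ((x + y) / 2) - φ x - φ y) * G x * G y)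
    (hW : ∀ x, 0 ≤ W x)
    (hK : ∀ x y, |x - y| ^ γ ≤ W x * W y)
    (hWi : Integrable (fun x => W x * G x))
    (hWb : (∫ x, W x * G x) ≤ 2) :
    ∀ᵐ x : ℝ, G x ≤ 64 / |x| := by
  have hGm := hGi.aestronglyMeasurable
  set IW : ℝ := ∫ x, W x * G x with hIW
  have hIW0 : 0 ≤ IW := integral_nonneg fun x => mul_nonneg (hW x) (hpos x)
  -- Step 1 : interval bound
  have key : ∀ r : ℝ, r ≠ 0 → ∀ ε : ℝ, 0 < ε → ε ≤ |r| / 4 →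
      (∫ x in Icc (r - ε) (r + ε), |x| * G x) ≤ 128 * ε := by
    intro r hr ε hε hεr
    obtain ⟨φ₀, hcd₀, hb₀, hd₀, hone₀, hzero₀⟩ := bump_antideriv r ε hε
    set s : ℝ := if 0 < r then 1 else -1 with hs
    have hs1 : |s| = 1 := by
      rw [hs]; split_ifs <;> simp
    have hsign : ∀ x : ℝ, x ∈ Ioo (r - 2*ε) (r + 2*ε) → 0 ≤ s * x ∧ s * x = |x| := by
      intro x hx
      rcases lt_trichotomy r 0 with hneg | hzero | hpos'
      · have habs : |r| = -r := abs_of_neg hneg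
        have hx0 : x < 0 := by
          have := hx.2
          rw [habs] at hεr
          linarith
        have hsx : s = -1 := by
          rw [hs]
          split_ifs with h
          · linarith
          · rfl
        rw [hsx]
        constructor
        · nlinarith
        · rw [abs_of_neg hx0]; ring
      · exact absurd hzero hr
      · have habs : |r| = r := abs_of_pos hpos'
        have hx0 : 0 < x := by
          have := hx.1
          rw [habs] at hεr
          linarith
        have hsx : s = 1 := by
          rw [hs]
          split_ifs with h
          · rfl
          · linarith
        rw [hsx]
        constructor
        · linarith
        · rw [abs_of_pos hx0]; ring
    set φ : ℝ → ℝ := fun u => s * φ₀ u with hφ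
    have hcd : ContDiff ℝ 1 φ := contDiff_const.mul hcd₀
    have hder : ∀ u, deriv φ u = s * deriv φ₀ u := by
      intro u
      rw [hφ]
      exact deriv_const_mul s ((hcd₀.differentiable one_ne_zero).differentiableAt)
    have hM : ∃ M, ∀ x, |φ x| ≤ M ∧ |deriv φ x| ≤ M := by
      refine ⟨4 * ε + 1, fun x => ⟨?_, ?_⟩⟩
      · rw [hφ]
        simp only
        rw [abs_mul, hs1, one_mul]
        rw [abs_of_nonneg (hb₀ x).1]
        linarith [(hb₀ x).2]
      · rw [hder, abs_mul, hs1, one_mul]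
        rw [abs_of_nonneg (hd₀ x).1]
        linarith [(hd₀ x).2]
    have heqn := heq φ hcd hM
    -- bound the double integral
    set F : ℝ → ℝ → ℝ := fun x y =>
      |x - y| ^ γ * (2 * φ ((x + y) / 2) - φ x - φ y) * G x * G y with hF
    have hφb : ∀ u, |φ u| ≤ 4 * ε := by
      intro u
      rw [hφ]; simp only
      rw [abs_mul, hs1, one_mul, abs_of_nonneg (hb₀ u).1]
      exact (hb₀ u).2
    have hbr : ∀ x y : ℝ, |2 * φ ((x + y) / 2) - φ x - φ y| ≤ 16 * ε := by
      intro x y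
      have h1 := hφb ((x + y) / 2)
      have h2 := hφb x
      have h3 := hφb y
      have : |2 * φ ((x + y) / 2) - φ x - φ y| ≤ 2 * |φ ((x+y)/2)| + |φ x| + |φ y| := by
        calc |2 * φ ((x + y) / 2) - φ x - φ y|
            ≤ |2 * φ ((x + y) / 2) - φ x| + |φ y| := abs_sub _ _
          _ ≤ |2 * φ ((x + y) / 2)| + |φ x| + |φ y| := by
              linarith [abs_sub (2 * φ ((x + y) / 2)) (φ x)]
          _ = 2 * |φ ((x+y)/2)| + |φ x| + |φ y| := by rw [abs_mul, abs_two]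
      linarith
    have hFb : ∀ x y : ℝ, |F x y| ≤ (16 * ε * (W x * G x)) * (W y * G y) := by
      intro x y
      rw [hF]
      simp only
      rw [abs_mul, abs_mul, abs_mul]
      rw [abs_of_nonneg (Real.rpow_nonneg (abs_nonneg _) γ),
        abs_of_nonneg (hpos x), abs_of_nonneg (hpos y)]
      have hKb := hK x y
      have hbr' := hbr x y
      have h0K : (0:ℝ) ≤ |x - y| ^ γ := Real.rpow_nonneg (abs_nonneg _) γ
      have h0br : (0:ℝ) ≤ |2 * φ ((x + y) / 2) - φ x - φ y| := abs_nonneg _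
      calc |x - y| ^ γ * |2 * φ ((x + y) / 2) - φ x - φ y| * G x * G y
          ≤ (W x * W y) * (16 * ε) * G x * G y := by
            apply mul_le_mul_of_nonneg_right _ (hpos y)
            apply mul_le_mul_of_nonneg_right _ (hpos x)
            exact mul_le_mul hKb hbr' h0br (mul_nonneg (hW x) (hW y))
        _ = (16 * ε * (W x * G x)) * (W y * G y) := by ring
    have hcφ : Continuous φ := hcd.continuous
    have hFyint : ∀ x : ℝ, Integrable (fun y => F x y) := by
      intro x
      apply Integrable.mono ((hWi.const_mul (16 * ε * (W x * G x))))
      · apply AEStronglyMeasurable.mul _ hGm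
        apply AEStronglyMeasurable.mul _ aestronglyMeasurable_const
        apply AEStronglyMeasurable.mul
        · exact (((measurable_const.sub measurable_id).abs).pow_const γ).aestronglyMeasurable
        · apply Continuous.aestronglyMeasurable
          have : Continuous fun y : ℝ => (x + y) / 2 := by fun_prop
          fun_prop
      · filter_upwards with y
        rw [Real.norm_eq_abs, Real.norm_eq_abs]
        calc |F x y| ≤ (16 * ε * (W x * G x)) * (W y * G y) := hFb x y
          _ ≤ |(16 * ε * (W x * G x)) * (W y * G y)| := le_abs_self _
    have hinner : ∀ x : ℝ, |∫ y, F x y| ≤ (16 * ε * IW) * (W x * G x) := by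
      intro x
      calc |∫ y, F x y| ≤ ∫ y, |F x y| := by
            simpa [Real.norm_eq_abs] using norm_integral_le_integral_norm (fun y => F x y)
        _ ≤ ∫ y, (16 * ε * (W x * G x)) * (W y * G y) := by
            apply integral_mono (hFyint x).abs (hWi.const_mul _)
            intro y
            exact hFb x y
        _ = (16 * ε * (W x * G x)) * IW := by rw [integral_const_mul]
        _ = (16 * ε * IW) * (W x * G x) := by ring
    have hR : |∫ x, ∫ y, F x y| ≤ 64 * ε := by
      calc |∫ x, ∫ y, F x y| ≤ ∫ x, |∫ y, F x y| := by
            simpa [Real.norm_eq_abs] using norm_integral_le_integral_norm (fun x => ∫ y, F x y)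
        _ ≤ ∫ x, (16 * ε * IW) * (W x * G x) := by
            apply integral_mono_of_nonneg
            · filter_upwards with x; exact abs_nonneg _
            · exact hWi.const_mul _
            · filter_upwards with x; exact hinner x
        _ = (16 * ε * IW) * IW := by rw [integral_const_mul]
        _ = 16 * ε * (IW * IW) := by ring
        _ ≤ 16 * ε * 4 := by
            apply mul_le_mul_of_nonneg_left _ (by positivity)
            nlinarith
        _ = 64 * ε := by ring
    -- the equation
    have hI : (∫ x, x * deriv φ x * G x) = -2 * ∫ x, ∫ y, F x y := by
      have := heqn
      rw [hF]
      linarith [heqn]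
    have hIb : |∫ x, x * deriv φ x * G x| ≤ 128 * ε := by
      have h2 : |(-2 : ℝ)| = 2 := by norm_num
      rw [hI, abs_mul, h2]
      calc (2:ℝ) * |∫ x, ∫ y, F x y| ≤ 2 * (64 * ε) := by linarith [hR]
        _ = 128 * ε := by ring
    -- indicator comparison
    have hIccsub : Icc (r - ε) (r + ε) ⊆ Ioo (r - 2*ε) (r + 2*ε) := by
      intro x hx
      constructor
      · have := hx.1; linarith
      · have := hx.2; linarith
    have hpt : ∀ x : ℝ, (Icc (r - ε) (r + ε)).indicator (fun x => |x| * G x) x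
        ≤ x * deriv φ x * G x := by
      intro x
      rw [hder]
      by_cases hx : x ∈ Icc (r - ε) (r + ε)
      · rw [indicator_of_mem hx]
        rw [hone₀ x hx]
        have hsx := (hsign x (hIccsub hx)).2
        have heq2 : x * (s * 1) * G x = |x| * G x := by
          rw [← hsx]; ring
        exact le_of_eq heq2.symm
      · rw [indicator_of_notMem hx]
        by_cases hx2 : x ∈ Ioo (r - 2*ε) (r + 2*ε)
        · have h1 := (hsign x hx2).1
          have h2 := (hd₀ x).1
          have heq3 : x * (s * deriv φ₀ x) * G x = (s * x) * deriv φ₀ x * G x := by ring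
          rw [heq3]
          exact mul_nonneg (mul_nonneg h1 h2) (hpos x)
        · rw [hzero₀ x hx2]
          simp
    have habs : Integrable (fun x => |x| * G x) := by
      apply prof_mul_int hpos hGi hG3 (continuous_abs.aestronglyMeasurable)
      intro x
      rw [abs_abs]
      nlinarith [abs_nonneg x, sq_nonneg (1 + |x|), pow_le_pow_right₀ (by linarith [abs_nonneg x] : (1:ℝ) ≤ 1 + |x|) (by norm_num : (1:ℕ) ≤ 3)]
    have hrhs_int : Integrable (fun x => x * deriv φ x * G x) := by
      apply prof_mul_int hpos hGi hG3
      · apply Continuous.aestronglyMeasurable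
        have hdc : Continuous (deriv φ) := hcd.continuous_deriv le_rfl
        exact continuous_id.mul hdc
      · intro x
        rw [hder, abs_mul, abs_mul, hs1]
        have := (hd₀ x).1
        have h2 := (hd₀ x).2
        have : |deriv φ₀ x| ≤ 1 := by
          rw [abs_of_nonneg (hd₀ x).1]; exact h2
        calc |x| * (1 * |deriv φ₀ x|) ≤ |x| * 1 := by
              apply mul_le_mul_of_nonneg_left _ (abs_nonneg x)
              rw [one_mul]; exact this
          _ = |x| := by ring
          _ ≤ (1 + |x|) ^ 3 := by
              nlinarith [abs_nonneg x, sq_nonneg (1 + |x|), sq_nonneg |x|]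
    calc (∫ x in Icc (r - ε) (r + ε), |x| * G x)
        = ∫ x, (Icc (r - ε) (r + ε)).indicator (fun x => |x| * G x) x := by
          rw [integral_indicator measurableSet_Icc]
      _ ≤ ∫ x, x * deriv φ x * G x := by
          apply integral_mono (habs.indicator measurableSet_Icc) hrhs_int hpt
      _ ≤ |∫ x, x * deriv φ x * G x| := le_abs_self _
      _ ≤ 128 * ε := hIb
  -- Step 2 : Lebesgue differentiation
  have habs : Integrable (fun x => |x| * G x) := by
    apply prof_mul_int hpos hGi hG3 (continuous_abs.aestronglyMeasurable)
    intro x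
    rw [abs_abs]
    nlinarith [abs_nonneg x, sq_nonneg (1 + |x|), sq_nonneg |x|]
  have had := (Besicovitch.vitaliFamily (volume : Measure ℝ)).ae_tendsto_average
    habs.locallyIntegrable
  have h0 : ∀ᵐ r : ℝ, r ≠ (0:ℝ) := by
    rw [ae_iff]
    convert Real.volume_singleton (a := 0) using 2
    ext x
    simp
  filter_upwards [had, h0] with r hrt hr0
  have hcomp := hrt.comp (Besicovitch.tendsto_filterAt volume r)
  have hub : ∀ᶠ ε in 𝓝[>] (0:ℝ),
      (⨍ y in Metric.closedBall r ε, |y| * G y) ≤ 64 := by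
    have hr4 : (0:ℝ) < |r| / 4 := by
      have := abs_pos.mpr hr0
      linarith
    have hmem : Ioc (0:ℝ) (|r|/4) ∈ 𝓝[>] (0:ℝ) :=
      Ioc_mem_nhdsGT hr4
    filter_upwards [hmem] with ε hεm
    have hε : 0 < ε := hεm.1
    rw [setAverage_eq, Real.volume_real_closedBall hε.le, Real.closedBall_eq_Icc]
    have hkey := key r hr0 ε hε hεm.2
    have ht : (ENNReal.ofReal (2 * ε)).toReal⁻¹ = (2*ε)⁻¹ := by
      rw [ENNReal.toReal_ofReal (by linarith)]
    rw [smul_eq_mul]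
    calc (2*ε)⁻¹ * ∫ y in Icc (r - ε) (r + ε), |y| * G y
        ≤ (2*ε)⁻¹ * (128 * ε) := by
          apply mul_le_mul_of_nonneg_left hkey (by positivity)
      _ = 64 := by field_simp; ring
  have hlim : |r| * G r ≤ 64 := le_of_tendsto hcomp hub
  rw [div_eq_mul_inv]
  rw [← mul_le_mul_iff_left₀ (abs_pos.mpr hr0)]
  calc G r * |r| = |r| * G r := by ring
    _ ≤ 64 := hlim
    _ = 64 * |r|⁻¹ * |r| := by
        field_simp

lemma prof_mul_intA {G : ℝ → ℝ} (hpos : ∀ x, 0 ≤ G x) (hGi : Integrable G)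
    (hG3 : Integrable (fun x => (1 + |x|) ^ (3 : ℝ) * G x))
    {c : ℝ → ℝ} (A : ℝ) (hc : AEStronglyMeasurable c volume)
    (hb : ∀ x, |c x| ≤ A * (1 + |x|) ^ 3) :
    Integrable (fun x => c x * G x) := by
  have h3 : Integrable (fun x => (1 + |x|) ^ (3 : ℕ) * G x) := by
    have : (fun x : ℝ => (1 + |x|) ^ (3 : ℝ) * G x) = fun x => (1 + |x|) ^ (3 : ℕ) * G x := by
      funext x
      rw [show ((3:ℝ) = ((3:ℕ):ℝ)) by norm_num, Real.rpow_natCast]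
    rwa [this] at hG3
  apply Integrable.mono ((h3.const_mul A)) (hc.mul hGi.aestronglyMeasurable)
  filter_upwards with x
  simp only [Pi.mul_apply]
  rw [Real.norm_eq_abs, Real.norm_eq_abs]
  have h1 : |c x * G x| = |c x| * G x := by rw [abs_mul, abs_of_nonneg (hpos x)]
  have h2 : |A * ((1 + |x|) ^ 3 * G x)| = |A| * ((1 + |x|) ^ 3 * G x) := by
    rw [abs_mul]
    congr 1
    exact abs_of_nonneg (mul_nonneg (by positivity) (hpos x))
  rw [h1, h2]
  calc |c x| * G x ≤ (A * (1 + |x|) ^ 3) * G x :=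
        mul_le_mul_of_nonneg_right (hb x) (hpos x)
    _ ≤ (|A| * (1 + |x|) ^ 3) * G x := by
        apply mul_le_mul_of_nonneg_right _ (hpos x)
        exact mul_le_mul_of_nonneg_right (le_abs_self A) (by positivity)
    _ = |A| * ((1 + |x|) ^ 3 * G x) := by ring

lemma rpow_abs_sq {t p : ℝ} (hp : 0 ≤ p) : |t| ^ p * t ^ 2 = |t| ^ (2 + p) := by
  rcases eq_or_ne t 0 with rfl | ht
  · rw [abs_zero, Real.zero_rpow (by linarith : (2:ℝ) + p ≠ 0)]
    have : ((0:ℝ)) ^ 2 = 0 := by norm_num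
    rw [this, mul_zero]
  · have habs : (0:ℝ) < |t| := abs_pos.mpr ht
    rw [show (2:ℝ) + p = p + 2 by ring, Real.rpow_add habs p 2]
    have : |t| ^ (2:ℝ) = t ^ 2 := by
      rw [show ((2:ℝ) = ((2:ℕ):ℝ)) by norm_num, Real.rpow_natCast, sq_abs]
    rw [this]

lemma sq_rpow_eq {t q : ℝ} (hq : 0 ≤ q) : (t ^ 2) ^ q = |t| ^ (2 * q) := by
  rw [← sq_abs, show |t| ^ 2 = |t| ^ ((2:ℕ):ℝ) by rw [Real.rpow_natCast],
    ← Real.rpow_mul (abs_nonneg t)]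
  norm_num

lemma aux_dom {x y : ℝ} : (1+|x|)*(1+|y|)*(2*x^2+2*y^2) ≤ 4*((1+|x|)^3*(1+|y|)^3) := by
  have hx : (1:ℝ) ≤ 1 + |x| := by linarith [abs_nonneg x]
  have hy : (1:ℝ) ≤ 1 + |y| := by linarith [abs_nonneg y]
  have hx2 : x^2 ≤ (1+|x|)^2 := by nlinarith [abs_nonneg x, sq_abs x]
  have hy2 : y^2 ≤ (1+|y|)^2 := by nlinarith [abs_nonneg y, sq_abs y]
  have hyb : (1+|y|) ≤ (1+|y|)^3 := le_self_pow₀ hy (by norm_num)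
  have hxb : (1+|x|) ≤ (1+|x|)^3 := le_self_pow₀ hx (by norm_num)
  have h1 : (1+|x|)*(1+|y|)*(2*x^2) ≤ 2*((1+|x|)^3*(1+|y|)^3) := by
    calc (1+|x|)*(1+|y|)*(2*x^2) ≤ (1+|x|)*(1+|y|)*(2*(1+|x|)^2) := by
          apply mul_le_mul_of_nonneg_left (by linarith) (by positivity)
      _ = 2*((1+|x|)^3*(1+|y|)) := by ring
      _ ≤ 2*((1+|x|)^3*(1+|y|)^3) := by
          apply mul_le_mul_of_nonneg_left _ (by norm_num)
          exact mul_le_mul_of_nonneg_left hyb (by positivity)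
  have h2 : (1+|x|)*(1+|y|)*(2*y^2) ≤ 2*((1+|x|)^3*(1+|y|)^3) := by
    calc (1+|x|)*(1+|y|)*(2*y^2) ≤ (1+|x|)*(1+|y|)*(2*(1+|y|)^2) := by
          apply mul_le_mul_of_nonneg_left (by linarith) (by positivity)
      _ = 2*((1+|x|)*(1+|y|)^3) := by ring
      _ ≤ 2*((1+|x|)^3*(1+|y|)^3) := by
          apply mul_le_mul_of_nonneg_left _ (by norm_num)
          exact mul_le_mul_of_nonneg_right hxb (by positivity)
  linarith

lemma sq_le_cube (x : ℝ) : x ^ 2 ≤ (1 + |x|) ^ 3 := by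
  nlinarith [abs_nonneg x, sq_abs x, pow_nonneg (abs_nonneg x) 3, sq_nonneg |x|]

lemma abs_le_cube (x : ℝ) : |x| ≤ (1 + |x|) ^ 3 := by
  nlinarith [abs_nonneg x, sq_nonneg |x|, pow_nonneg (abs_nonneg x) 3, sq_nonneg (1 + |x|)]

lemma sub_sq_le_cube (x y : ℝ) : (x - y) ^ 2 ≤ (1 + |x|) ^ 3 * (1 + |y|) ^ 3 := by
  have h := kernel_le_cube (by norm_num : (0:ℝ) ≤ 2) (by norm_num : (2:ℝ) ≤ 3) x y
  have h2 : |x - y| ^ (2:ℝ) = (x - y) ^ 2 := by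
    rw [show ((2:ℝ) = ((2:ℕ):ℝ)) by norm_num, Real.rpow_natCast, sq_abs]
  linarith [h2 ▸ h]

set_option maxHeartbeats 2000000 in
lemma lemB {γ : ℝ} {G : ℝ → ℝ} (hγ0 : 0 < γ) (hγ1 : γ ≤ 1)
    (hpos : ∀ x, 0 ≤ G x) (hGi : Integrable G)
    (hG3 : Integrable (fun x => (1 + |x|) ^ (3 : ℝ) * G x))
    (hmass : (∫ x, G x) = 1) (hmom : (∫ x, x * G x) = 0)
    (heq : ∀ φ : ℝ → ℝ, ContDiff ℝ 1 φ →
      (∃ M, ∀ x, |φ x| ≤ M ∧ |deriv φ x| ≤ M) →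
      -(1/4) * (∫ x, x * deriv φ x * G x) =
        (1/2) * ∫ x, ∫ y, |x - y| ^ γ * (2 * φ ((x + y) / 2) - φ x - φ y) * G x * G y) :
    (∫ x, x ^ 2 * G x) ≤ 1 / 2 := by
  have hGm := hGi.aestronglyMeasurable
  set m2 : ℝ := ∫ x, x ^ 2 * G x with hm2def
  have hm2i : Integrable (fun x => x ^ 2 * G x) := by
    apply prof_mul_intA hpos hGi hG3 1 (by fun_prop)
    intro x
    rw [one_mul, abs_of_nonneg (sq_nonneg x)]
    exact sq_le_cube x
  have hxGi : Integrable (fun x => x * G x) := by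
    apply prof_mul_intA hpos hGi hG3 1 continuous_id.aestronglyMeasurable
    intro x
    rw [one_mul]
    exact abs_le_cube x
  have hm2nn : 0 ≤ m2 := integral_nonneg fun x => mul_nonneg (sq_nonneg x) (hpos x)
  have hply : Integrable (fun x => (1 + |x|) ^ (3:ℕ) * G x) := by
    have : (fun x : ℝ => (1 + |x|) ^ (3 : ℝ) * G x) = fun x => (1 + |x|) ^ (3 : ℕ) * G x := by
      funext x
      rw [show ((3:ℝ) = ((3:ℕ):ℝ)) by norm_num, Real.rpow_natCast]
    rwa [this] at hG3
  set P : Measure (ℝ × ℝ) := (volume : Measure ℝ).prod volume with hP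
  set Ω : ℝ × ℝ → ℝ := fun p => ((1 + |p.1|) ^ 3 * G p.1) * ((1 + |p.2|) ^ 3 * G p.2) with hΩ
  have hΩi : Integrable Ω P := hply.mul_prod hply
  have hΩpos : ∀ p, 0 ≤ Ω p := fun p =>
    mul_nonneg (mul_nonneg (by positivity) (hpos _)) (mul_nonneg (by positivity) (hpos _))
  have hG1 : AEStronglyMeasurable (fun p : ℝ × ℝ => G p.1) P :=
    hGm.comp_quasiMeasurePreserving Measure.quasiMeasurePreserving_fst
  have hG2 : AEStronglyMeasurable (fun p : ℝ × ℝ => G p.2) P :=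
    hGm.comp_quasiMeasurePreserving Measure.quasiMeasurePreserving_snd
  have hGGm : AEStronglyMeasurable (fun p : ℝ × ℝ => G p.1 * G p.2) P := hG1.mul hG2
  -- LHS convergence
  have hεn : ∀ n : ℕ, (0:ℝ) < 1 / (n + 1) := fun n => by positivity
  have hLHS : Tendsto (fun n : ℕ => ∫ x, x * deriv (tf (1/(n+1))) x * G x) atTop
      (𝓝 (2 * m2)) := by
    have h2m : (∫ x, 2 * x ^ 2 * G x) = 2 * m2 := by
      have : (fun x : ℝ => 2 * x ^ 2 * G x) = fun x => 2 * (x ^ 2 * G x) := by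
        funext x; ring
      rw [this, integral_const_mul, hm2def]
    rw [← h2m]
    apply tendsto_integral_of_dominated_convergence (fun x => 2 * ((1 + |x|) ^ (3:ℕ) * G x))
    · intro n
      apply AEStronglyMeasurable.mul _ hGm
      apply Continuous.aestronglyMeasurable
      apply continuous_id.mul
      rw [tf_deriv (hεn n)]
      exact Continuous.div (by fun_prop) (by fun_prop)
        (fun x => by positivity)
    · exact hply.const_mul 2
    · intro n
      filter_upwards with x
      rw [tf_deriv (hεn n)]
      set ε : ℝ := 1/(n+1) with hε
      have hεp : 0 < ε := hεn n
      have h1le : (1:ℝ) ≤ (1 + ε * x ^ 2) ^ 2 := by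
        nlinarith [mul_nonneg hεp.le (sq_nonneg x)]
      have hD : |2 * x / (1 + ε * x ^ 2) ^ 2| ≤ 2 * |x| := by
        rw [abs_div, abs_of_pos (by positivity : (0:ℝ) < (1 + ε * x ^ 2) ^ 2),
          div_le_iff₀ (by positivity)]
        rw [abs_mul, abs_two]
        nlinarith [abs_nonneg x]
      rw [Real.norm_eq_abs, abs_mul, abs_mul, abs_of_nonneg (hpos x)]
      calc |x| * |2 * x / (1 + ε * x ^ 2) ^ 2| * G x
          ≤ |x| * (2 * |x|) * G x := by
            apply mul_le_mul_of_nonneg_right _ (hpos x)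
            exact mul_le_mul_of_nonneg_left hD (abs_nonneg x)
        _ = 2 * x ^ 2 * G x := by rw [← sq_abs]; ring
        _ ≤ 2 * ((1 + |x|) ^ 3 * G x) := by
            have := sq_le_cube x
            nlinarith [hpos x]
    · filter_upwards with x
      exact (tf_deriv_mul_tendsto x).mul_const (G x)
  -- product functions
  set q : ℝ := 1 + γ / 2 with hqdef
  have hq1 : 1 < q := by rw [hqdef]; linarith
  have h2q : 2 * q = 2 + γ := by rw [hqdef]; ring
  have hKms : AEStronglyMeasurable (fun p : ℝ × ℝ => |p.1 - p.2| ^ γ) P :=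
    (((measurable_fst.sub measurable_snd).abs).pow_const γ).aestronglyMeasurable
  have hK2ms : AEStronglyMeasurable (fun p : ℝ × ℝ => |p.1 - p.2| ^ (2 + γ)) P :=
    (((measurable_fst.sub measurable_snd).abs).pow_const (2 + γ)).aestronglyMeasurable
  have htfc : ∀ n : ℕ, Continuous (tf ((1:ℝ)/(n+1))) := fun n => (tf_contDiff (hεn n)).continuous
  set Fn : ℕ → ℝ × ℝ → ℝ := fun n p =>
    |p.1 - p.2| ^ γ * (2 * tf (1/(n+1)) ((p.1 + p.2)/2) - tf (1/(n+1)) p.1 - tf (1/(n+1)) p.2)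
      * G p.1 * G p.2 with hFn
  set Finf : ℝ × ℝ → ℝ := fun p =>
    |p.1 - p.2| ^ γ * (-(p.1 - p.2) ^ 2 / 2) * G p.1 * G p.2 with hFinf
  have hFnm : ∀ n, AEStronglyMeasurable (Fn n) P := by
    intro n
    have hbrc : Continuous (fun p : ℝ × ℝ =>
        2 * tf (1/(n+1)) ((p.1 + p.2)/2) - tf (1/(n+1)) p.1 - tf (1/(n+1)) p.2) := by
      apply Continuous.sub
      apply Continuous.sub
      · exact continuous_const.mul ((htfc n).comp (by fun_prop))
      · exact (htfc n).comp continuous_fst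
      · exact (htfc n).comp continuous_snd
    exact ((hKms.mul hbrc.aestronglyMeasurable).mul hG1).mul hG2
  have hFnb : ∀ n, ∀ p : ℝ × ℝ, ‖Fn n p‖ ≤ 4 * Ω p := by
    intro n p
    obtain ⟨x, y⟩ := p
    set ε : ℝ := 1/(n+1)
    have hεp : (0:ℝ) < ε := hεn n
    have hbr : |2 * tf ε ((x + y)/2) - tf ε x - tf ε y| ≤ 2 * x ^ 2 + 2 * y ^ 2 := by
      have m1 := tf_nonneg hεp ((x+y)/2)
      have m2' := tf_nonneg hεp x
      have m3 := tf_nonneg hεp y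
      have u1 := tf_le_sq hεp ((x+y)/2)
      have u2 := tf_le_sq hεp x
      have u3 := tf_le_sq hεp y
      rw [abs_le]
      constructor <;> nlinarith [sq_nonneg (x+y), sq_nonneg (x-y)]
    have hKb := kernel_le hγ0.le hγ1 x y
    have hK0 : (0:ℝ) ≤ |x - y| ^ γ := Real.rpow_nonneg (abs_nonneg _) γ
    rw [Real.norm_eq_abs, hFn]
    simp only
    rw [abs_mul, abs_mul, abs_mul, abs_of_nonneg hK0, abs_of_nonneg (hpos x),
      abs_of_nonneg (hpos y)]
    calc |x - y| ^ γ * |2 * tf ε ((x + y)/2) - tf ε x - tf ε y| * G x * G y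
        ≤ ((1 + |x|) * (1 + |y|)) * (2 * x ^ 2 + 2 * y ^ 2) * G x * G y := by
          apply mul_le_mul_of_nonneg_right _ (hpos y)
          apply mul_le_mul_of_nonneg_right _ (hpos x)
          exact mul_le_mul hKb hbr (abs_nonneg _) (by positivity)
      _ ≤ (4 * ((1 + |x|) ^ 3 * (1 + |y|) ^ 3)) * G x * G y := by
          apply mul_le_mul_of_nonneg_right _ (hpos y)
          apply mul_le_mul_of_nonneg_right _ (hpos x)
          have := aux_dom (x := x) (y := y)
          linarith
      _ = 4 * Ω (x, y) := by rw [hΩ]; ring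
  have hFni : ∀ n, Integrable (Fn n) P := by
    intro n
    apply Integrable.mono (hΩi.const_mul 4) (hFnm n)
    filter_upwards with p
    calc ‖Fn n p‖ ≤ 4 * Ω p := hFnb n p
      _ ≤ ‖4 * Ω p‖ := le_abs_self _
  have hFinfi : Integrable Finf P := by
    have hm : AEStronglyMeasurable Finf P := by
      apply AEStronglyMeasurable.mul _ hG2
      apply AEStronglyMeasurable.mul _ hG1
      apply hKms.mul
      apply Continuous.aestronglyMeasurable
      fun_prop
    apply Integrable.mono (hΩi.const_mul 4) hm
    filter_upwards with p
    obtain ⟨x, y⟩ := p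
    have hKb := kernel_le hγ0.le hγ1 x y
    have hK0 : (0:ℝ) ≤ |x - y| ^ γ := Real.rpow_nonneg (abs_nonneg _) γ
    rw [Real.norm_eq_abs, hFinf]
    simp only
    rw [abs_mul, abs_mul, abs_mul, abs_of_nonneg hK0, abs_of_nonneg (hpos x),
      abs_of_nonneg (hpos y)]
    have hab : |(-(x - y) ^ 2 / 2)| ≤ 2 * x ^ 2 + 2 * y ^ 2 := by
      rw [abs_div, abs_neg, abs_of_nonneg (sq_nonneg _)]
      have : |(2:ℝ)| = 2 := by norm_num
      rw [this]
      nlinarith [sq_nonneg (x + y)]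
    calc |x - y| ^ γ * |(-(x - y) ^ 2 / 2)| * G x * G y
        ≤ ((1 + |x|) * (1 + |y|)) * (2 * x ^ 2 + 2 * y ^ 2) * G x * G y := by
          apply mul_le_mul_of_nonneg_right _ (hpos y)
          apply mul_le_mul_of_nonneg_right _ (hpos x)
          exact mul_le_mul hKb hab (abs_nonneg _) (by positivity)
      _ ≤ (4 * ((1 + |x|) ^ 3 * (1 + |y|) ^ 3)) * G x * G y := by
          apply mul_le_mul_of_nonneg_right _ (hpos y)
          apply mul_le_mul_of_nonneg_right _ (hpos x)
          have := aux_dom (x := x) (y := y)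
          linarith
      _ = 4 * Ω (x, y) := by rw [hΩ]; ring
      _ ≤ ‖4 * Ω (x, y)‖ := le_abs_self _
  have hprod : Tendsto (fun n => ∫ p, Fn n p ∂P) atTop (𝓝 (∫ p, Finf p ∂P)) := by
    apply tendsto_integral_of_dominated_convergence (fun p => 4 * Ω p) hFnm (hΩi.const_mul 4)
    · intro n
      filter_upwards with p
      exact hFnb n p
    · filter_upwards with p
      obtain ⟨x, y⟩ := p
      have h1 := tf_tendsto ((x + y)/2)
      have h2 := tf_tendsto x
      have h3 := tf_tendsto y
      have hbr := ((h1.const_mul 2).sub h2).sub h3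
      have htot := ((hbr.const_mul (|x - y| ^ γ)).mul_const (G x)).mul_const (G y)
      have hval : |x - y| ^ γ * (2 * ((x + y)/2) ^ 2 - x ^ 2 - y ^ 2) * G x * G y
          = Finf (x, y) := by
        rw [hFinf]
        simp only
        ring
      rw [← hval]
      exact htot
  -- identity per n
  have han : ∀ n : ℕ, -(1/4) * (∫ x, x * deriv (tf (1/(n+1))) x * G x)
      = (1/2) * ∫ p, Fn n p ∂P := by
    intro n
    have hMn : ∃ M, ∀ x, |tf (1/(n+1)) x| ≤ M ∧ |deriv (tf (1/(n+1))) x| ≤ M :=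
      ⟨1/(1/((n:ℝ)+1)) + 1/Real.sqrt (1/((n:ℝ)+1)), fun x =>
        ⟨tf_bounded (hεn n) x, tf_deriv_bounded (hεn n) x⟩⟩
    have h := heq (tf (1/(n+1))) (tf_contDiff (hεn n)) hMn
    rw [h]
    congr 1
    exact integral_integral (hFni n)
  -- pass to the limit
  have hlim1 : Tendsto (fun n : ℕ => (1/2) * ∫ p, Fn n p ∂P) atTop (𝓝 (-(1/4) * (2 * m2))) := by
    apply Tendsto.congr (fun n => han n)
    exact hLHS.const_mul (-(1/4))
  have hlim2 : Tendsto (fun n : ℕ => (1/2) * ∫ p, Fn n p ∂P) atTop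
      (𝓝 ((1/2) * ∫ p, Finf p ∂P)) := hprod.const_mul (1/2)
  have hmain : -(1/4) * (2 * m2) = (1/2) * ∫ p, Finf p ∂P :=
    tendsto_nhds_unique hlim1 hlim2
  -- rewrite Finf integral
  set K2 : ℝ × ℝ → ℝ := fun p => |p.1 - p.2| ^ (2 + γ) * (G p.1 * G p.2) with hK2
  have hK2i : Integrable K2 P := by
    apply Integrable.mono hΩi (hK2ms.mul hGGm)
    filter_upwards with p
    obtain ⟨x, y⟩ := p
    have hKb := kernel_le_cube (by linarith : (0:ℝ) ≤ 2 + γ) (by linarith : 2 + γ ≤ 3) x y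
    have hK0 : (0:ℝ) ≤ |x - y| ^ (2 + γ) := Real.rpow_nonneg (abs_nonneg _) _
    simp only [Pi.mul_apply, Real.norm_eq_abs, hΩ]
    rw [abs_mul, abs_of_nonneg hK0, abs_mul, abs_of_nonneg (hpos x), abs_of_nonneg (hpos y)]
    have hfin : |x - y| ^ (2 + γ) * (G x * G y)
        ≤ (1 + |x|) ^ 3 * (1 + |y|) ^ 3 * (G x * G y) := by
      apply mul_le_mul_of_nonneg_right hKb (mul_nonneg (hpos x) (hpos y))
    calc |x - y| ^ (2 + γ) * (G x * G y)
        ≤ (1 + |x|) ^ 3 * (1 + |y|) ^ 3 * (G x * G y) := hfin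
      _ = (1 + |x|) ^ 3 * G x * ((1 + |y|) ^ 3 * G y) := by ring
      _ ≤ |(1 + |x|) ^ 3 * G x * ((1 + |y|) ^ 3 * G y)| := le_abs_self _
  set J : ℝ := ∫ p, K2 p ∂P with hJdef
  have hFinfK2 : Finf = fun p => -(1/2) * K2 p := by
    funext p
    obtain ⟨x, y⟩ := p
    rw [hFinf, hK2]
    simp only
    rw [← rpow_abs_sq (le_of_lt hγ0) (t := x - y)]
    ring
  have hJm2 : J = 2 * m2 := by
    have h1 : ∫ p, Finf p ∂P = -(1/2) * J := by
      rw [hFinfK2, hJdef]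
      exact integral_const_mul _ _
    rw [h1] at hmain
    linarith
  -- Fubini for K2
  have hJiter : J = ∫ x, ∫ y, |x - y| ^ (2 + γ) * (G x * G y) := by
    rw [hJdef, hP]
    exact integral_prod K2 hK2i
  have hpull : ∀ x : ℝ, (∫ y, |x - y| ^ (2 + γ) * (G x * G y))
      = (∫ y, |x - y| ^ (2 + γ) * G y) * G x := by
    intro x
    have : (fun y => |x - y| ^ (2 + γ) * (G x * G y))
        = fun y => G x * (|x - y| ^ (2 + γ) * G y) := by
      funext y; ring
    rw [this, integral_const_mul]
    ring
  -- inner expectation identity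
  have hin2 : ∀ x : ℝ, (∫ y, (x - y) ^ 2 * G y) = x ^ 2 + m2 := by
    intro x
    have e1 : (fun y => (x - y) ^ 2 * G y)
        = fun y => (x ^ 2 * G y - (2 * x) * (y * G y)) + y ^ 2 * G y := by
      funext y; ring
    have i2 : Integrable (fun y => x ^ 2 * G y) := hGi.const_mul _
    have i3 : Integrable (fun y => (2 * x) * (y * G y)) := hxGi.const_mul _
    have i1 : Integrable (fun y => x ^ 2 * G y - (2 * x) * (y * G y)) := i2.sub i3
    rw [e1, integral_add i1 hm2i, integral_sub i2 i3,
      integral_const_mul, integral_const_mul, hmass, hmom, hm2def]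
    ring
  -- inner Jensen
  have hinnerJ : ∀ x : ℝ, (x ^ 2 + m2) ^ q ≤ ∫ y, |x - y| ^ (2 + γ) * G y := by
    intro x
    have hsq : ∀ y : ℝ, ((x - y) ^ 2) ^ q = |x - y| ^ (2 + γ) := by
      intro y
      rw [sq_rpow_eq (by linarith : (0:ℝ) ≤ q), h2q]
    have h1 : Integrable (fun y => (x - y) ^ 2 * G y) := by
      apply prof_mul_intA hpos hGi hG3 ((1 + |x|) ^ 3)
        ((continuous_const.sub continuous_id).pow 2).aestronglyMeasurable
      intro y
      rw [abs_of_nonneg (sq_nonneg _)]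
      exact sub_sq_le_cube x y
    have h2 : Integrable (fun y => ((x - y) ^ 2) ^ q * G y) := by
      apply prof_mul_intA hpos hGi hG3 ((1 + |x|) ^ 3)
      · apply Continuous.aestronglyMeasurable
        apply Continuous.rpow_const (by fun_prop)
        intro y
        right; linarith
      · intro y
        rw [hsq y, abs_of_nonneg (Real.rpow_nonneg (abs_nonneg _) _)]
        exact kernel_le_cube (by linarith) (by linarith) x y
    have hj := jensen_w (w := G) (f := fun y => (x - y) ^ 2) (q := q) (le_of_lt hq1)
      hpos (fun y => sq_nonneg _) hmass hGi h1 h2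
    rw [hin2 x] at hj
    calc (x ^ 2 + m2) ^ q ≤ ∫ y, ((x - y) ^ 2) ^ q * G y := hj
      _ = ∫ y, |x - y| ^ (2 + γ) * G y := by
          congr 1
          funext y
          rw [hsq y]
  -- outer Jensen
  have houtint : (∫ x, (x ^ 2 + m2) * G x) = 2 * m2 := by
    have e1 : (fun x => (x ^ 2 + m2) * G x) = fun x => x ^ 2 * G x + m2 * G x := by
      funext x; ring
    rw [e1, integral_add hm2i (hGi.const_mul m2), integral_const_mul, hmass, hm2def]
    ring
  have houti : Integrable (fun x => (x ^ 2 + m2) * G x) := by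
    have e1 : (fun x => (x ^ 2 + m2) * G x) = fun x => x ^ 2 * G x + m2 * G x := by
      funext x; ring
    rw [e1]
    exact hm2i.add (hGi.const_mul m2)
  have hqi : Integrable (fun x => (x ^ 2 + m2) ^ q * G x) := by
    apply prof_mul_intA hpos hGi hG3 ((1 + m2) ^ 2)
    · apply Continuous.aestronglyMeasurable
      apply Continuous.rpow_const (by fun_prop)
      intro x
      right; linarith
    · intro x
      have hb0 : (0:ℝ) ≤ x ^ 2 + m2 := by positivity
      rw [abs_of_nonneg (Real.rpow_nonneg hb0 q)]
      have s1 : x ^ 2 + m2 ≤ (1 + m2) * (1 + |x|) ^ 2 := by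
        nlinarith [sq_abs x, abs_nonneg x, sq_nonneg (1 + |x|)]
      have s2 : (x ^ 2 + m2) ^ q ≤ ((1 + m2) * (1 + |x|) ^ 2) ^ q :=
        Real.rpow_le_rpow hb0 s1 (by linarith)
      have s3 : ((1 + m2) * (1 + |x|) ^ 2) ^ q = (1 + m2) ^ q * ((1 + |x|) ^ 2) ^ q :=
        Real.mul_rpow (by linarith) (by positivity)
      have s4 : (1 + m2) ^ q ≤ (1 + m2) ^ (2:ℝ) :=
        Real.rpow_le_rpow_of_exponent_le (by linarith) (by rw [hqdef]; linarith)
      have s5 : (1 + m2) ^ (2:ℝ) = (1 + m2) ^ (2:ℕ) := by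
        rw [show ((2:ℝ) = ((2:ℕ):ℝ)) by norm_num, Real.rpow_natCast]
      have s6 : ((1 + |x|) ^ 2) ^ q = (abs (1 + |x|)) ^ (2 * q) := sq_rpow_eq (by linarith)
      have s7 : (abs (1 + |x|)) = 1 + |x| := abs_of_nonneg (by positivity)
      have s8 : (1 + |x|) ^ (2 * q) ≤ (1 + |x|) ^ (3:ℝ) := by
        apply Real.rpow_le_rpow_of_exponent_le (by linarith [abs_nonneg x])
        rw [h2q]; linarith
      have s9 : (1 + |x|) ^ (3:ℝ) = (1 + |x|) ^ (3:ℕ) := by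
        rw [show ((3:ℝ) = ((3:ℕ):ℝ)) by norm_num, Real.rpow_natCast]
      calc (x ^ 2 + m2) ^ q ≤ (1 + m2) ^ q * ((1 + |x|) ^ 2) ^ q := by rw [← s3]; exact s2
        _ = (1 + m2) ^ q * ((1 + |x|) ^ (2 * q)) := by rw [s6, s7]
        _ ≤ (1 + m2) ^ (2:ℝ) * (1 + |x|) ^ (3:ℝ) := by
            apply mul_le_mul s4 s8 (Real.rpow_nonneg (by positivity) _)
              (Real.rpow_nonneg (by linarith [hm2nn]) _)
        _ = (1 + m2) ^ 2 * (1 + |x|) ^ 3 := by rw [s5, s9]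
  have houterJ : (2 * m2) ^ q ≤ ∫ x, (x ^ 2 + m2) ^ q * G x := by
    have hj := jensen_w (w := G) (f := fun x => x ^ 2 + m2) (q := q) (le_of_lt hq1)
      hpos (fun x => by positivity) hmass hGi houti hqi
    rwa [houtint] at hj
  -- x ↦ (∫ y |x-y|^{2+γ} G y) * G x is integrable with integral J
  have hhGi : Integrable (fun x => (∫ y, |x - y| ^ (2 + γ) * G y) * G x) := by
    have h0 := hK2i.integral_prod_left
    have e1 : (fun x => ∫ y, K2 (x, y)) = fun x => (∫ y, |x - y| ^ (2 + γ) * G y) * G x := by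
      funext x
      rw [hK2]
      simp only
      exact hpull x
    rwa [e1] at h0
  have hJval : (∫ x, (∫ y, |x - y| ^ (2 + γ) * G y) * G x) = J := by
    rw [hJiter]
    congr 1
    funext x
    rw [hpull x]
  -- middle comparison
  have hmid : (∫ x, (x ^ 2 + m2) ^ q * G x) ≤ J := by
    rw [← hJval]
    apply integral_mono hqi hhGi
    intro x
    apply mul_le_mul_of_nonneg_right (hinnerJ x) (hpos x)
  -- conclude
  have hchain : (2 * m2) ^ q ≤ 2 * m2 := by
    calc (2 * m2) ^ q ≤ ∫ x, (x ^ 2 + m2) ^ q * G x := houterJ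
      _ ≤ J := hmid
      _ = 2 * m2 := hJm2
  have := le_one_of_rpow_le (by linarith) hq1 hchain
  linarith


/-- **Uniform pointwise upper bound.** There is a constant `C > 0`, independent of `γ`,
such that `G(x) ≤ C/|x|` for a.e. `x ∈ ℝ`, for every `γ ∈ [0,1]` and `G ∈ 𝓔_γ`. -/
theorem uniform_pointwise_bound :
    ∃ C > (0:ℝ), ∀ γ ∈ Icc (0:ℝ) 1, ∀ G : ℝ → ℝ, IsProfile γ G →
      ∀ᵐ x : ℝ, G x ≤ C / |x| := by

  refine ⟨64, by norm_num, ?_⟩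
  rintro γ ⟨hγ0, hγ1⟩ G ⟨hpos, hGi, hG3, hmass, hmom, heq⟩
  have habs : Integrable (fun x => |x| * G x) := by
    apply prof_mul_intA hpos hGi hG3 1 continuous_abs.aestronglyMeasurable
    intro x
    rw [one_mul, abs_abs]
    exact abs_le_cube x
  rcases eq_or_lt_of_le hγ0 with hγz | hγpos
  · -- γ = 0 : the kernel is identically 1
    apply lemA (W := fun _ => (1:ℝ)) hpos hGi hG3 heq (fun x => zero_le_one)
    · intro x y
      rw [← hγz, Real.rpow_zero]
      norm_num
    · have : (fun x => (1:ℝ) * G x) = G := by funext x; rw [one_mul]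
      rw [this]
      exact hGi
    · have : (fun x => (1:ℝ) * G x) = G := by funext x; rw [one_mul]
      rw [this, hmass]
      norm_num
  · -- γ > 0 : second moment is at most 1/2
    have hm2 := lemB hγpos hγ1 hpos hGi hG3 hmass hmom heq
    have hm2i : Integrable (fun x => x ^ 2 * G x) := by
      apply prof_mul_intA hpos hGi hG3 1 (by fun_prop)
      intro x
      rw [one_mul, abs_of_nonneg (sq_nonneg x)]
      exact sq_le_cube x
    have hm1 : (∫ x, |x| * G x) ≤ 1 := by
      have h2' : Integrable (fun x => |x| ^ (2:ℝ) * G x) := by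
        have : (fun x => |x| ^ (2:ℝ) * G x) = fun x => x ^ 2 * G x := by
          funext x
          rw [show ((2:ℝ) = ((2:ℕ):ℝ)) by norm_num, Real.rpow_natCast, sq_abs]
        rw [this]
        exact hm2i
      have hj := jensen_w (w := G) (f := fun x => |x|) (q := 2) one_le_two
        hpos (fun x => abs_nonneg x) hmass hGi habs h2'
      have hval : (∫ x, |x| ^ (2:ℝ) * G x) = ∫ x, x ^ 2 * G x := by
        congr 1
        funext x
        rw [show ((2:ℝ) = ((2:ℕ):ℝ)) by norm_num, Real.rpow_natCast, sq_abs]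
      rw [hval] at hj
      set a : ℝ := ∫ x, |x| * G x with hadef
      have ha0 : 0 ≤ a := integral_nonneg fun x => mul_nonneg (abs_nonneg x) (hpos x)
      have ha2 : a ^ (2:ℝ) = a ^ (2:ℕ) := by
        rw [show ((2:ℝ) = ((2:ℕ):ℝ)) by norm_num, Real.rpow_natCast]
      rw [ha2] at hj
      nlinarith
    apply lemA (W := fun x => 1 + |x|) hpos hGi hG3 heq (fun x => by positivity)
    · exact kernel_le hγ0 hγ1
    · have : (fun x => (1 + |x|) * G x) = fun x => G x + |x| * G x := by
        funext x; ring
      rw [this]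
      exact hGi.add habs
    · have : (fun x => (1 + |x|) * G x) = fun x => G x + |x| * G x := by
        funext x; ring
      rw [this, integral_add hGi habs, hmass]
      linarith

end
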